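/- arXiv:2108.09654 — 3 statements merged into one kernel-verified Lean document; each statement's English description precedes it below -/
import Mathlib

section
/- Exponential decay by induction on scales: let γ ∈ (0,1/2), κ > 0 with κ < log 2 / |log γ|, and let θ : (0,∞) → [0,1] satisfy θ(r) ≤ C_0 exp(−r^κ/C_0) + M·θ(γr)^2 for all r ≥ r_0, for some constants C_0, M, r_0 > 0, together with the a priori bound θ(r) ≤ δ for all r ≥ r_0 where M·δ ≤ 1/2 and δ ≤ 1. Then there exists C_1 > 0 such that θ(r) ≤ C_1 exp(−r^κ/C_1) for all r > 0. -/
set_option maxHeartbeats 1000000 in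
/-- Exponential decay by induction on scales. -/
theorem stmt5 (γ κ C₀ M r₀ δ : ℝ) (hγ0 : 0 < γ) (hγ : γ < 1 / 2) (hκ0 : 0 < κ)
    (hκ : κ < Real.log 2 / |Real.log γ|)
    (hC₀ : 0 < C₀) (hM : 0 < M) (hr₀ : 0 < r₀) (hδ : 0 < δ)
    (hMδ : M * δ ≤ 1 / 2) (hδ1 : δ ≤ 1)
    (θ : ℝ → ℝ) (hθ : ∀ r > (0 : ℝ), 0 ≤ θ r ∧ θ r ≤ 1)
    (hap : ∀ r ≥ r₀, θ r ≤ δ)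
    (hrec : ∀ r ≥ r₀, θ r ≤ C₀ * Real.exp (-(r ^ κ) / C₀) + M * θ (γ * r) ^ 2) :
    ∃ C₁ > (0 : ℝ), ∀ r > (0 : ℝ), θ r ≤ C₁ * Real.exp (-(r ^ κ) / C₁) := by
  classical
  have hγ1 : γ < 1 := by linarith
  set ig := γ⁻¹ with hig
  have hig0 : 0 < ig := inv_pos.mpr hγ0
  have higγ : γ * ig = 1 := mul_inv_cancel₀ (ne_of_gt hγ0)
  have hig1 : 1 < ig := by nlinarith
  set ρ := ig ^ κ with hρ
  have hρ0 : 0 < ρ := Real.rpow_pos_of_pos hig0 κ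
  have hρ1 : 1 < ρ := (Real.one_lt_rpow_iff_of_pos hig0).mpr (Or.inl ⟨hig1, hκ0⟩)
  have hρ2 : ρ < 2 := by
    have hlogγ : Real.log γ < 0 := Real.log_neg hγ0 hγ1
    have habs : |Real.log γ| = -Real.log γ := abs_of_neg hlogγ
    have hkl : κ * (-Real.log γ) < Real.log 2 := by
      rw [habs] at hκ
      exact (lt_div_iff₀ (by linarith)).mp hκ
    have hlogig : Real.log ig = -Real.log γ := Real.log_inv γ
    calc ρ = Real.exp (Real.log ig * κ) := Real.rpow_def_of_pos hig0 κ
      _ < Real.exp (Real.log 2) := by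
          apply Real.exp_lt_exp.mpr
          rw [hlogig]; linarith [hkl]
      _ = 2 := Real.exp_log (by norm_num)
  set b := Real.log 2 with hbdef
  have hb : 0 < b := Real.log_pos one_lt_two
  set ε := 1 - Real.exp (-((2 - ρ) * b)) with hεdef
  have hε : 0 < ε := by
    have h0 : (0:ℝ) < (2 - ρ) * b := mul_pos (by linarith) hb
    have h1 : Real.exp (-((2 - ρ) * b)) < 1 := Real.exp_lt_one_iff.mpr (by linarith)
    simp only [hεdef]; linarith
  set D := |Real.log (M * C₀ / ε)| + 1 with hDdef
  have hD0 : 0 < D := by positivity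
  have hDkey : M * C₀ * Real.exp (-(D * ρ)) ≤ ε := by
    have hu : (0:ℝ) < M * C₀ / ε := by positivity
    have h1 : Real.log (M * C₀ / ε) ≤ D := by
      have := le_abs_self (Real.log (M * C₀ / ε)); linarith
    have h2 : D ≤ D * ρ := by nlinarith
    have h3 : Real.exp (-(D * ρ)) ≤ Real.exp (-Real.log (M * C₀ / ε)) :=
      Real.exp_le_exp.mpr (neg_le_neg (le_trans h1 h2))
    have h4 : Real.exp (-Real.log (M * C₀ / ε)) = ε / (M * C₀) := by
      rw [Real.exp_neg, Real.exp_log hu]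
      field_simp
    calc M * C₀ * Real.exp (-(D * ρ)) ≤ M * C₀ * (ε / (M * C₀)) := by
          rw [← h4]; exact mul_le_mul_of_nonneg_left h3 (by positivity)
      _ = ε := by field_simp
  set R := max r₀ ((C₀ * (b + D)) ^ κ⁻¹) with hRdef
  have hRr₀ : r₀ ≤ R := le_max_left _ _
  have hR0 : 0 < R := lt_of_lt_of_le hr₀ hRr₀
  have hRκ0 : 0 < R ^ κ := Real.rpow_pos_of_pos hR0 κ
  have hRκ : C₀ * (b + D) ≤ R ^ κ := by
    have hx0 : (0:ℝ) ≤ C₀ * (b + D) := by positivity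
    calc C₀ * (b + D) = ((C₀ * (b + D)) ^ κ⁻¹) ^ κ :=
          (Real.rpow_inv_rpow hx0 (ne_of_gt hκ0)).symm
      _ ≤ R ^ κ := Real.rpow_le_rpow (by positivity) (le_max_right _ _) hκ0.le
  -- power identity
  have hpow : ∀ n : ℕ, (ig ^ n) ^ κ = ρ ^ n := by
    intro n
    rw [← Real.rpow_natCast ig n, ← Real.rpow_mul hig0.le, hρ,
      ← Real.rpow_natCast (ig ^ κ) n, ← Real.rpow_mul hig0.le, mul_comm]
  -- main induction
  have main : ∀ n : ℕ, ∀ r : ℝ, ig ^ n * R ≤ r → M * θ r ≤ Real.exp (-(b * ρ ^ n)) := by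
    intro n
    induction n with
    | zero =>
      intro r hr
      rw [pow_zero, one_mul] at hr
      have hrr₀ : r₀ ≤ r := le_trans hRr₀ hr
      have hexp : Real.exp (-(b * ρ ^ 0)) = 1 / 2 := by
        rw [pow_zero, mul_one, hbdef, Real.exp_neg, Real.exp_log (by norm_num : (0:ℝ) < 2)]
        norm_num
      rw [hexp]
      calc M * θ r ≤ M * δ := mul_le_mul_of_nonneg_left (hap r hrr₀) hM.le
        _ ≤ 1 / 2 := hMδ
    | succ n ih =>
      intro r hr
      have hign : (1:ℝ) ≤ ig ^ (n + 1) := one_le_pow₀ hig1.le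
      have hr0 : 0 < r := lt_of_lt_of_le (by positivity) hr
      have hrR : R ≤ r := le_trans (by nlinarith) hr
      have hrr₀ : r₀ ≤ r := le_trans hRr₀ hrR
      have hγreq : γ * (ig ^ (n + 1) * R) = ig ^ n * R := by
        rw [pow_succ]; field_simp [hig]; ring; exact higγ
      have hγr : ig ^ n * R ≤ γ * r := by
        rw [← hγreq]; exact mul_le_mul_of_nonneg_left hr hγ0.le
      have hθγr := ih (γ * r) hγr
      have hθγr0 : 0 ≤ θ (γ * r) := (hθ (γ * r) (by positivity)).1
      have key1 : M * θ r ≤ M * C₀ * Real.exp (-(r ^ κ) / C₀) + (M * θ (γ * r)) ^ 2 := by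
        calc M * θ r ≤ M * (C₀ * Real.exp (-(r ^ κ) / C₀) + M * θ (γ * r) ^ 2) :=
              mul_le_mul_of_nonneg_left (hrec r hrr₀) hM.le
          _ = M * C₀ * Real.exp (-(r ^ κ) / C₀) + (M * θ (γ * r)) ^ 2 := by ring
      have hrκ : ρ ^ (n + 1) * R ^ κ ≤ r ^ κ := by
        calc ρ ^ (n + 1) * R ^ κ = (ig ^ (n + 1) * R) ^ κ := by
              rw [Real.mul_rpow (by positivity) hR0.le, hpow]
          _ ≤ r ^ κ := Real.rpow_le_rpow (by positivity) hr hκ0.le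
      have hρn1 : (1:ℝ) ≤ ρ ^ n := one_le_pow₀ hρ1.le
      have hρpow : ρ ≤ ρ ^ (n + 1) := by
        calc ρ = ρ ^ 1 := (pow_one ρ).symm
          _ ≤ ρ ^ (n + 1) := pow_le_pow_right₀ hρ1.le (Nat.le_add_left 1 n)
      have hρp : (0:ℝ) < ρ ^ (n + 1) := pow_pos hρ0 _
      have hE : Real.exp (-(r ^ κ) / C₀) ≤ Real.exp (-((b + D) * ρ ^ (n + 1))) := by
        apply Real.exp_le_exp.mpr
        rw [neg_div, neg_le_neg_iff, le_div_iff₀ hC₀]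
        nlinarith [mul_le_mul_of_nonneg_right hRκ hρp.le]
      have h1 : M * C₀ * Real.exp (-((b + D) * ρ ^ (n + 1))) ≤
          ε * Real.exp (-(b * ρ ^ (n + 1))) := by
        have hsplit : Real.exp (-((b + D) * ρ ^ (n + 1))) =
            Real.exp (-(D * ρ ^ (n + 1))) * Real.exp (-(b * ρ ^ (n + 1))) := by
          rw [← Real.exp_add]; ring_nf
        rw [hsplit, ← mul_assoc]
        apply mul_le_mul_of_nonneg_right _ (Real.exp_nonneg _)
        calc M * C₀ * Real.exp (-(D * ρ ^ (n + 1)))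
            ≤ M * C₀ * Real.exp (-(D * ρ)) := by
              apply mul_le_mul_of_nonneg_left _ (by positivity)
              apply Real.exp_le_exp.mpr
              apply neg_le_neg
              exact mul_le_mul_of_nonneg_left hρpow hD0.le
          _ ≤ ε := hDkey
      have h2 : (Real.exp (-(b * ρ ^ n))) ^ 2 ≤
          Real.exp (-(b * ρ ^ (n + 1))) * Real.exp (-((2 - ρ) * b)) := by
        rw [sq, ← Real.exp_add, ← Real.exp_add]
        apply Real.exp_le_exp.mpr
        have hps : ρ ^ (n + 1) = ρ ^ n * ρ := pow_succ ρ n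
        nlinarith [mul_nonneg (mul_nonneg (by linarith : (0:ℝ) ≤ 2 - ρ) hb.le)
          (by linarith : (0:ℝ) ≤ ρ ^ n - 1)]
      have hsq : (M * θ (γ * r)) ^ 2 ≤ (Real.exp (-(b * ρ ^ n))) ^ 2 :=
        pow_le_pow_left₀ (by positivity) hθγr 2
      calc M * θ r ≤ M * C₀ * Real.exp (-(r ^ κ) / C₀) + (M * θ (γ * r)) ^ 2 := key1
        _ ≤ M * C₀ * Real.exp (-((b + D) * ρ ^ (n + 1))) + (Real.exp (-(b * ρ ^ n))) ^ 2 := by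
            apply add_le_add _ hsq
            exact mul_le_mul_of_nonneg_left hE (by positivity)
        _ ≤ ε * Real.exp (-(b * ρ ^ (n + 1))) +
            Real.exp (-(b * ρ ^ (n + 1))) * Real.exp (-((2 - ρ) * b)) := add_le_add h1 h2
        _ = Real.exp (-(b * ρ ^ (n + 1))) * (ε + Real.exp (-((2 - ρ) * b))) := by ring
        _ = Real.exp (-(b * ρ ^ (n + 1))) := by
            rw [hεdef]; ring
  -- convert scales to exponential decay in r
  set c := b * (ρ * R ^ κ)⁻¹ with hcdef
  have hc0 : 0 < c := by positivity
  have hscale : ∀ r : ℝ, R ≤ r → M * θ r ≤ Real.exp (-(c * r ^ κ)) := by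
    intro r hrR
    have hr0 : 0 < r := lt_of_lt_of_le hR0 hrR
    have hex : ∃ m : ℕ, r / R < ig ^ m := pow_unbounded_of_one_lt (r / R) hig1
    have hspec : r / R < ig ^ (Nat.find hex) := Nat.find_spec hex
    have hm0 : Nat.find hex ≠ 0 := by
      intro h
      rw [h, pow_zero] at hspec
      have : (1:ℝ) ≤ r / R := (one_le_div hR0).mpr hrR
      linarith
    obtain ⟨n, hn⟩ : ∃ n, Nat.find hex = n + 1 :=
      ⟨Nat.find hex - 1, (Nat.succ_pred_eq_of_pos (Nat.pos_of_ne_zero hm0)).symm⟩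
    have hlow : ig ^ n * R ≤ r := by
      have hnm : n < Nat.find hex := by omega
      have hmin := Nat.find_min hex hnm
      push_neg at hmin
      calc ig ^ n * R ≤ (r / R) * R := mul_le_mul_of_nonneg_right hmin hR0.le
        _ = r := by field_simp
    have hup : r < ig ^ (n + 1) * R := by
      rw [← hn]
      have := (div_lt_iff₀ hR0).mp hspec
      linarith
    have hbound := main n r hlow
    have hrκ : r ^ κ ≤ ρ ^ (n + 1) * R ^ κ := by
      calc r ^ κ ≤ (ig ^ (n + 1) * R) ^ κ :=
            Real.rpow_le_rpow hr0.le hup.le hκ0.le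
        _ = ρ ^ (n + 1) * R ^ κ := by
            rw [Real.mul_rpow (by positivity) hR0.le, hpow]
    have hcb : c * r ^ κ ≤ b * ρ ^ n := by
      have h := mul_le_mul_of_nonneg_left hrκ
        (by positivity : (0:ℝ) ≤ b * (ρ * R ^ κ)⁻¹)
      calc c * r ^ κ ≤ b * (ρ * R ^ κ)⁻¹ * (ρ ^ (n + 1) * R ^ κ) := h
        _ = b * ρ ^ n := by
            rw [pow_succ]; field_simp
    calc M * θ r ≤ Real.exp (-(b * ρ ^ n)) := hbound
      _ ≤ Real.exp (-(c * r ^ κ)) := Real.exp_le_exp.mpr (by linarith)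
  -- choose C₁
  refine ⟨max (max c⁻¹ M⁻¹) (max (Real.exp 1) (R ^ κ)), ?_, ?_⟩
  · positivity
  intro r hr0
  set C₁ := max (max c⁻¹ M⁻¹) (max (Real.exp 1) (R ^ κ)) with hC₁def
  have hC₁0 : 0 < C₁ := by positivity
  have hC₁c : c⁻¹ ≤ C₁ := le_trans (le_max_left _ _) (le_max_left _ _)
  have hC₁M : M⁻¹ ≤ C₁ := le_trans (le_max_right _ _) (le_max_left _ _)
  have hC₁e : Real.exp 1 ≤ C₁ := le_trans (le_max_left _ _) (le_max_right _ _)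
  have hC₁R : R ^ κ ≤ C₁ := le_trans (le_max_right _ _) (le_max_right _ _)
  have hrκ0 : 0 ≤ r ^ κ := (Real.rpow_pos_of_pos hr0 κ).le
  rcases le_or_gt R r with hRr | hrR
  · have hMθ := hscale r hRr
    have hθr : θ r ≤ M⁻¹ * Real.exp (-(c * r ^ κ)) := by
      rw [← mul_le_mul_iff_right₀ hM]
      calc M * θ r ≤ Real.exp (-(c * r ^ κ)) := hMθ
        _ = M * (M⁻¹ * Real.exp (-(c * r ^ κ))) := by field_simp
    have hee : Real.exp (-(c * r ^ κ)) ≤ Real.exp (-(r ^ κ) / C₁) := by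
      apply Real.exp_le_exp.mpr
      rw [neg_div, neg_le_neg_iff, div_le_iff₀ hC₁0]
      have hc1 : (1:ℝ) ≤ c * C₁ := by
        have := mul_le_mul_of_nonneg_left hC₁c hc0.le
        rwa [mul_inv_cancel₀ hc0.ne'] at this
      nlinarith
    calc θ r ≤ M⁻¹ * Real.exp (-(c * r ^ κ)) := hθr
      _ ≤ C₁ * Real.exp (-(r ^ κ) / C₁) :=
          mul_le_mul hC₁M hee (Real.exp_nonneg _) hC₁0.le
  · have hθ1 : θ r ≤ 1 := (hθ r hr0).2
    have hrκR : r ^ κ ≤ R ^ κ := Real.rpow_le_rpow hr0.le hrR.le hκ0.le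
    have h1 : r ^ κ / C₁ ≤ 1 := by
      rw [div_le_one hC₁0]; linarith
    have h2 : Real.exp (-1) ≤ Real.exp (-(r ^ κ) / C₁) := by
      apply Real.exp_le_exp.mpr
      rw [neg_div]
      linarith
    have h3 : Real.exp 1 * Real.exp (-1) ≤ C₁ * Real.exp (-1) :=
      mul_le_mul_of_nonneg_right hC₁e (Real.exp_nonneg _)
    rw [← Real.exp_add] at h3
    norm_num [Real.exp_zero] at h3 ⊢
    calc θ r ≤ 1 := hθ1
      _ ≤ C₁ * Real.exp (-(r ^ κ) / C₁) := by
          nlinarith [h2, Real.exp_pos (-1:ℝ), hC₁0]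
end

section
/- Polynomial decay by induction on scales: let γ ∈ (0,1/2), κ > 0, and θ : (0,∞) → [0,1] satisfy θ(r) ≤ C_0 r^{−κ} + M θ(γr)^2 for all r ≥ r_0, together with θ(r) ≤ δ for all r ≥ r_0 where M·δ·γ^{−κ} ≤ 1/2 (smallness depending on κ, γ). Then there exists C_1 such that θ(r) ≤ C_1 r^{−κ} for all r > 0. -/
/-- Polynomial decay by induction on scales. -/
theorem stmt6 (γ κ C₀ M r₀ δ : ℝ) (hγ0 : 0 < γ) (hγ : γ < 1 / 2) (hκ0 : 0 < κ)
    (hC₀ : 0 < C₀) (hM : 0 < M) (hr₀ : 0 < r₀) (hδ : 0 < δ)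
    (hMδ : 2 * M * δ ≤ γ ^ κ)
    (θ : ℝ → ℝ) (hθ : ∀ r > (0 : ℝ), 0 ≤ θ r ∧ θ r ≤ 1)
    (hap : ∀ r ≥ r₀, θ r ≤ δ)
    (hrec : ∀ r ≥ r₀, θ r ≤ C₀ * r ^ (-κ) + M * θ (γ * r) ^ 2) :
    ∃ C₁ > (0 : ℝ), ∀ r > (0 : ℝ), θ r ≤ C₁ * r ^ (-κ) := by
  have hγ1 : γ < 1 := by linarith
  set A : ℝ := max (2 * C₀) ((r₀ / γ) ^ κ) with hA
  have hAp : 0 < A := lt_of_lt_of_le (by linarith) (le_max_left _ _)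
  have hr0γ : 0 < r₀ / γ := div_pos hr₀ hγ0
  -- small scale bound
  have small : ∀ r : ℝ, 0 < r → r ≤ r₀ / γ → θ r ≤ A * r ^ (-κ) := by
    intro r hr hrle
    have h1 : θ r ≤ 1 := (hθ r hr).2
    have hrκ : (0:ℝ) < r ^ κ := Real.rpow_pos_of_pos hr κ
    have hone : (1:ℝ) = r ^ κ * r ^ (-κ) := by
      rw [Real.rpow_neg hr.le, mul_inv_cancel₀ (ne_of_gt hrκ)]
    have hmono : r ^ κ ≤ (r₀ / γ) ^ κ := Real.rpow_le_rpow hr.le hrle hκ0.le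
    have hrnκ : (0:ℝ) < r ^ (-κ) := Real.rpow_pos_of_pos hr _
    calc θ r ≤ 1 := h1
      _ = r ^ κ * r ^ (-κ) := hone
      _ ≤ (r₀ / γ) ^ κ * r ^ (-κ) := by
          exact mul_le_mul_of_nonneg_right hmono hrnκ.le
      _ ≤ A * r ^ (-κ) := by
          exact mul_le_mul_of_nonneg_right (le_max_right _ _) hrnκ.le
  -- key induction on scales
  have key : ∀ n : ℕ, ∀ r : ℝ, r₀ ≤ r → r ≤ r₀ / γ ^ n → θ r ≤ A * r ^ (-κ) := by
    intro n
    induction n with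
    | zero =>
      intro r hr1 hr2
      simp only [pow_zero, div_one] at hr2
      exact small r (lt_of_lt_of_le hr₀ hr1)
        (hr2.trans (by rw [le_div_iff₀ hγ0]; nlinarith))
    | succ n ih =>
      intro r hr1 hr2
      have hr : 0 < r := lt_of_lt_of_le hr₀ hr1
      by_cases hc : γ * r < r₀
      · exact small r hr (by rw [le_div_iff₀ hγ0]; linarith [hc, mul_comm γ r])
      · push_neg at hc
        have hγr : 0 < γ * r := mul_pos hγ0 hr
        have hγrle : γ * r ≤ r₀ / γ ^ n := by
          rw [le_div_iff₀ (pow_pos hγ0 n)]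
          have := (le_div_iff₀ (pow_pos hγ0 (n+1))).mp hr2
          calc γ * r * γ ^ n = r * γ ^ (n+1) := by ring
            _ ≤ r₀ := this
        have hih := ih (γ * r) hc hγrle
        have hδγr : θ (γ * r) ≤ δ := hap (γ * r) hc
        have hθγr0 : 0 ≤ θ (γ * r) := (hθ (γ * r) hγr).1
        have hrecr := hrec r hr1
        have hγκ : (0:ℝ) < γ ^ κ := Real.rpow_pos_of_pos hγ0 κ
        have hrnκ : (0:ℝ) < r ^ (-κ) := Real.rpow_pos_of_pos hr _
        -- (γ r)^(-κ) = γ^(-κ) * r^(-κ)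
        have hsplit : (γ * r) ^ (-κ) = γ ^ (-κ) * r ^ (-κ) :=
          Real.mul_rpow hγ0.le hr.le
        have hγnκ : γ ^ (-κ) = (γ ^ κ)⁻¹ := Real.rpow_neg hγ0.le κ
        -- M * θ(γr)^2 ≤ M * δ * θ(γr) ≤ M * δ * A * (γr)^(-κ) ≤ (A/2) * r^(-κ)
        have hq : M * θ (γ * r) ^ 2 ≤ M * δ * (A * ((γ * r) ^ (-κ))) := by
          have h2 : θ (γ * r) ^ 2 ≤ δ * θ (γ * r) := by nlinarith
          nlinarith [hih, mul_le_mul_of_nonneg_left h2 hM.le,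
            mul_le_mul_of_nonneg_left hih (mul_pos hM hδ).le]
        have hq2 : M * δ * (A * ((γ * r) ^ (-κ))) ≤ (A / 2) * r ^ (-κ) := by
          rw [hsplit, hγnκ]
          rw [show M * δ * (A * ((γ ^ κ)⁻¹ * r ^ (-κ)))
              = (M * δ * (γ ^ κ)⁻¹) * (A * r ^ (-κ)) by ring]
          have h3 : M * δ * (γ ^ κ)⁻¹ ≤ 1 / 2 := by
            rw [mul_inv_le_iff₀ hγκ]; linarith
          have h4 : 0 ≤ A * r ^ (-κ) := (mul_pos hAp hrnκ).le
          nlinarith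
        have hAc : 2 * C₀ ≤ A := le_max_left _ _
        calc θ r ≤ C₀ * r ^ (-κ) + M * θ (γ * r) ^ 2 := hrecr
          _ ≤ C₀ * r ^ (-κ) + (A / 2) * r ^ (-κ) := by linarith [hq.trans hq2]
          _ ≤ (A / 2) * r ^ (-κ) + (A / 2) * r ^ (-κ) := by nlinarith
          _ = A * r ^ (-κ) := by ring
  refine ⟨A, hAp, fun r hr => ?_⟩
  rcases le_or_gt r₀ r with h | h
  · obtain ⟨n, hn⟩ := exists_pow_lt_of_lt_one (div_pos hr₀ (lt_of_lt_of_le hr₀ h)) hγ1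
    refine key n r h ?_
    rw [le_div_iff₀ (pow_pos hγ0 n)]
    have h1 : γ ^ n * r < (r₀ / r) * r := mul_lt_mul_of_pos_right hn hr
    rw [div_mul_cancel₀ _ (ne_of_gt hr)] at h1
    linarith
  · refine small r hr ?_
    have : r₀ ≤ r₀ / γ := by rw [le_div_iff₀ hγ0]; nlinarith
    linarith
end

section
/- Union bound tail estimate for the dependence radius: let (R^y)_{y∈Z^d} be nonnegative random variables with P[R^y > ℓ] ≤ C_0 ℓ^{−(κ+d)} for all ℓ > 0, uniformly in y, for some C_0, κ > 0. Define for z ∈ Z^d, r > 0 the random variable R_r^z := inf{ℓ > 0 : R^y ≤ max(|z−y|−r, r+ℓ−|z−y|) for all y ∈ Z^d}. Then there exists C_1 (depending only on C_0, κ, d) such that P[R_r^z > 2ℓ] ≤ C_1 (1 + r/ℓ)^{d−1} ℓ^{−κ} for all r, ℓ > 0. -/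
open MeasureTheory

open Finset Metric
open scoped ENNReal NNReal

/-- Euclidean distance between two points of the lattice `ℤ^d`. -/
noncomputable def normZ {d : ℕ} (z y : Fin d → ℤ) : ℝ :=
  ‖(show EuclideanSpace ℝ (Fin d) from WithLp.toLp 2 (fun i => ((z i - y i : ℤ) : ℝ)))‖

/-- The dependence radius `𝓡_r^z` built from the action radii `(R^y)_y`. -/
noncomputable def depRadius {d : ℕ} {Ω : Type*} (R : (Fin d → ℤ) → Ω → ℝ)
    (z : Fin d → ℤ) (r : ℝ) (ω : Ω) : ℝ :=
  sInf {ℓ : ℝ | 0 < ℓ ∧ ∀ y, R y ω ≤ max (normZ z y - r) (r + ℓ - normZ z y)}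

namespace Stmt7Aux


/-- Mean value type inequality for `x ^ (-β)`. -/
lemma telescope {β a b : ℝ} (hβ : 0 < β) (ha : 0 < a) (hab : a ≤ b) :
    β * ((b - a) * b ^ (-β - 1)) ≤ a ^ (-β) - b ^ (-β) := by
  have hb : 0 < b := lt_of_lt_of_le ha hab
  have h1 : a ^ (-β) = b ^ (-β) * (b / a) ^ β := by
    rw [Real.div_rpow hb.le ha.le, Real.rpow_neg ha.le, Real.rpow_neg hb.le]
    field_simp
  have hlog : (b - a) / b ≤ Real.log (b / a) := by
    have h2 : Real.log (a / b) ≤ a / b - 1 := Real.log_le_sub_one_of_pos (by positivity)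
    have h3 : Real.log (a / b) = - Real.log (b / a) := by
      rw [← Real.log_inv]; congr 1; field_simp
    have h4 : (b - a) / b = 1 - a / b := by field_simp
    linarith [h2, h3, h4.ge, h4.le]
  have hexp : 1 + β * Real.log (b / a) ≤ (b / a) ^ β := by
    rw [Real.rpow_def_of_pos (by positivity)]
    linarith [Real.add_one_le_exp (Real.log (b / a) * β)]
  have hbpow : b ^ (-β - 1) = b ^ (-β) / b := by
    rw [Real.rpow_sub hb, Real.rpow_one]
  have hbp : 0 < b ^ (-β) := Real.rpow_pos_of_pos hb _
  have : b ^ (-β) * (β * ((b - a) / b)) ≤ b ^ (-β) * ((b / a) ^ β - 1) := by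
    apply mul_le_mul_of_nonneg_left _ hbp.le
    calc β * ((b - a) / b) ≤ β * Real.log (b / a) := by
          apply mul_le_mul_of_nonneg_left hlog hβ.le
      _ ≤ (b / a) ^ β - 1 := by linarith
  calc β * ((b - a) * b ^ (-β - 1)) = b ^ (-β) * (β * ((b - a) / b)) := by
        rw [hbpow]; ring
    _ ≤ b ^ (-β) * ((b / a) ^ β - 1) := this
    _ = a ^ (-β) - b ^ (-β) := by rw [h1]; ring

/-- Sum of `(ℓ + j) ^ (-β-1)` over a shell index is `≲ ℓ^(-β)`. -/
lemma sum_shell {β ℓ : ℝ} (hβ : 0 < β) (hℓ : 1 ≤ ℓ) (N : ℕ) :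
    ∑ j ∈ Finset.range N, (ℓ + j) ^ (-β - 1) ≤ (1 + 1 / β) * ℓ ^ (-β) := by
  have hℓ0 : 0 < ℓ := lt_of_lt_of_le one_pos hℓ
  have hℓβ : 0 < ℓ ^ (-β) := Real.rpow_pos_of_pos hℓ0 _
  rcases N with _ | n
  · simp; positivity
  rw [Finset.sum_range_succ']
  push_cast
  have h0 : (ℓ + 0) ^ (-β - 1) ≤ 1 * ℓ ^ (-β) := by
    rw [add_zero, one_mul]
    apply Real.rpow_le_rpow_of_exponent_le hℓ; linarith
  have h1 : ∑ j ∈ Finset.range n, (ℓ + (j + 1 : ℕ)) ^ (-β - 1) ≤ (1 / β) * ℓ ^ (-β) := by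
    have key : ∀ j ∈ Finset.range n, (ℓ + (j + 1 : ℕ)) ^ (-β - 1) ≤
        (1 / β) * ((ℓ + j) ^ (-β) - (ℓ + (j + 1 : ℕ)) ^ (-β)) := by
      intro j _
      have hb := telescope hβ (show (0:ℝ) < ℓ + j by positivity)
        (show (ℓ + (j:ℝ)) ≤ ℓ + ((j:ℕ) + 1 : ℕ) by push_cast; linarith)
      rw [div_mul_eq_mul_div, le_div_iff₀ hβ]
      push_cast at hb ⊢
      nlinarith [hb]
    calc ∑ j ∈ Finset.range n, (ℓ + (j + 1 : ℕ)) ^ (-β - 1)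
        ≤ ∑ j ∈ Finset.range n, (1 / β) * ((ℓ + j) ^ (-β) - (ℓ + (j + 1 : ℕ)) ^ (-β)) :=
          Finset.sum_le_sum key
      _ = (1 / β) * ∑ j ∈ Finset.range n, ((fun k : ℕ => (ℓ + k) ^ (-β)) j
            - (fun k : ℕ => (ℓ + k) ^ (-β)) (j + 1)) := by
          rw [← Finset.mul_sum]
      _ = (1 / β) * (ℓ ^ (-β) - (ℓ + n) ^ (-β)) := by
          rw [Finset.sum_range_sub']; norm_num
      _ ≤ (1 / β) * ℓ ^ (-β) := by
          have : 0 < (ℓ + (n:ℝ)) ^ (-β) := by positivity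
          apply mul_le_mul_of_nonneg_left _ (by positivity)
          linarith
  push_cast at h1
  linarith


variable {d : ℕ}


variable {d : ℕ}

lemma pow_sub_pow_le {x y : ℝ} (hy : 0 ≤ y) (hxy : y ≤ x) :
    ∀ n : ℕ, x ^ (n + 1) - y ^ (n + 1) ≤ (n + 1) * x ^ n * (x - y) := by
  intro n
  induction n with
  | zero => simp
  | succ n ih =>
    have hx : 0 ≤ x := le_trans hy hxy
    have h1 : y ^ (n + 1) ≤ x ^ (n + 1) := pow_le_pow_left₀ hy hxy _
    have h2 : (0:ℝ) ≤ x ^ n := pow_nonneg hx n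
    calc x ^ (n + 2) - y ^ (n + 2) = x * (x ^ (n + 1) - y ^ (n + 1)) + (x - y) * y ^ (n + 1) := by
          ring
      _ ≤ x * ((n + 1) * x ^ n * (x - y)) + (x - y) * x ^ (n + 1) := by
          have := mul_le_mul_of_nonneg_left ih hx
          have := mul_le_mul_of_nonneg_left h1 (sub_nonneg.2 hxy)
          nlinarith
      _ = ((n + 1 : ℕ) + 1 : ℝ) * x ^ (n + 1) * (x - y) := by push_cast; ring

noncomputable def ev (v : Fin d → ℤ) : EuclideanSpace ℝ (Fin d) := WithLp.toLp 2 (fun i => (v i : ℝ))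

def cube (v : Fin d → ℤ) : Set (EuclideanSpace ℝ (Fin d)) :=
  (MeasurableEquiv.toLp 2 (Fin d → ℝ)).symm ⁻¹' (Set.univ.pi fun i => Set.Ico (v i : ℝ) (v i + 1))

lemma mem_cube {u : EuclideanSpace ℝ (Fin d)} {v : Fin d → ℤ} :
    u ∈ cube v ↔ ∀ i, (v i : ℝ) ≤ u i ∧ u i < v i + 1 := by
  simp [cube, Set.mem_pi, MeasurableEquiv.coe_toLp_symm]

lemma cube_measurable (v : Fin d → ℤ) : MeasurableSet (cube v) :=
  (MeasurableEquiv.toLp 2 (Fin d → ℝ)).symm.measurable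
    (MeasurableSet.univ_pi fun i => measurableSet_Ico)

lemma volume_cube (v : Fin d → ℤ) : volume (cube v) = 1 := by
  rw [cube, (EuclideanSpace.volume_preserving_symm_measurableEquiv_toLp (Fin d)).measure_preimage
    (MeasurableSet.univ_pi fun i => measurableSet_Ico).nullMeasurableSet]
  rw [volume_pi_pi]
  simp

lemma cube_disjoint {v w : Fin d → ℤ} (hvw : v ≠ w) : Disjoint (cube v) (cube w) := by
  rw [Set.disjoint_left]
  intro u hu hu'
  apply hvw
  funext i
  have h1 := (mem_cube.1 hu) i
  have h2 := (mem_cube.1 hu') i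
  have : (v i : ℝ) < w i + 1 := lt_of_le_of_lt h1.1 h2.2
  have : (w i : ℝ) < v i + 1 := lt_of_le_of_lt h2.1 h1.2
  have hvw1 : v i < w i + 1 := by exact_mod_cast ‹(v i : ℝ) < w i + 1›
  have hvw2 : w i < v i + 1 := by exact_mod_cast ‹(w i : ℝ) < v i + 1›
  omega

lemma norm_sub_ev_le {u : EuclideanSpace ℝ (Fin d)} {v : Fin d → ℤ} (hu : u ∈ cube v) :
    ‖u - ev v‖ ≤ Real.sqrt d := by
  rw [EuclideanSpace.norm_eq]
  apply Real.sqrt_le_sqrt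
  calc ∑ i, ‖(u - ev v) i‖ ^ 2 ≤ ∑ _i : Fin d, (1:ℝ) := by
        apply Finset.sum_le_sum
        intro i _
        have h := (mem_cube.1 hu) i
        have : (u - ev v) i = u i - (v i : ℝ) := by simp [ev]
        rw [this]
        rw [Real.norm_eq_abs, sq_abs]
        nlinarith [h.1, h.2]
    _ = d := by simp


/-- The constant in the annulus counting bound. -/
noncomputable def Kc (d : ℕ) : ℝ :=
  (Real.sqrt Real.pi ^ d / Real.Gamma (d / 2 + 1)) * d * (1 + 2 * Real.sqrt d)

lemma Kc_pos {d : ℕ} (hd : 0 < d) : 0 < Kc d := by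
  have h1 : 0 < Real.Gamma ((d : ℝ) / 2 + 1) := Real.Gamma_pos_of_pos (by positivity)
  have h2 : 0 < Real.sqrt Real.pi := Real.sqrt_pos.2 Real.pi_pos
  have : (0:ℝ) < d := by exact_mod_cast hd
  unfold Kc
  positivity

/-- Annulus counting: lattice points with norm in an interval of length `≤ 1`. -/
lemma count_annulus (hd : 0 < d) {a b : ℝ} (hb0 : 0 ≤ b) (hb : b ≤ a + 1)
    (G : Finset (Fin d → ℤ)) (hG : ∀ v ∈ G, a ≤ ‖ev v‖ ∧ ‖ev v‖ ≤ b) :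
    (G.card : ℝ) ≤ Kc d * (a + 1 + Real.sqrt d) ^ (d - 1) := by
  haveI : Nonempty (Fin d) := ⟨⟨0, hd⟩⟩
  rcases G.eq_empty_or_nonempty with rfl | ⟨v0, hv0⟩
  · simp only [Finset.card_empty, Nat.cast_zero]
    have hab : (0:ℝ) ≤ a + 1 + Real.sqrt d := by
      have := (Real.sqrt_nonneg (d:ℝ)); linarith [hb0, hb]
    exact mul_nonneg (Kc_pos hd).le (pow_nonneg hab _)
  have hab : a ≤ b := le_trans (hG v0 hv0).1 (hG v0 hv0).2
  set sd := Real.sqrt (d : ℝ) with hsd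
  have hsd0 : 0 ≤ sd := Real.sqrt_nonneg _
  set a' := max (a - sd) 0 with ha'
  set b' := b + sd with hb'
  have ha'0 : 0 ≤ a' := le_max_right _ _
  have hb'0 : 0 ≤ b' := by positivity
  have ha'b' : a' ≤ b' := by
    apply max_le _ (by positivity)
    linarith
  set Vc : ℝ := Real.sqrt Real.pi ^ d / Real.Gamma (d / 2 + 1) with hVc
  have hVc0 : 0 < Vc := by
    have h1 : 0 < Real.Gamma ((d : ℝ) / 2 + 1) := Real.Gamma_pos_of_pos (by positivity)
    have h2 : 0 < Real.sqrt Real.pi := Real.sqrt_pos.2 Real.pi_pos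
    positivity
  -- cubes are contained in the annulus
  have hsub : ∀ v ∈ G, cube v ⊆ closedBall (0 : EuclideanSpace ℝ (Fin d)) b' \ ball 0 a' := by
    intro v hv u hu
    have hnorm := norm_sub_ev_le hu
    have h1 : ‖u‖ ≤ ‖ev v‖ + sd := by
      calc ‖u‖ = ‖ev v + (u - ev v)‖ := by rw [show ev v + (u - ev v) = u by abel]
        _ ≤ ‖ev v‖ + ‖u - ev v‖ := norm_add_le _ _
        _ ≤ ‖ev v‖ + sd := by linarith
    have h2 : ‖ev v‖ - sd ≤ ‖u‖ := by
      have := norm_sub_norm_le (ev v) u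
      rw [show ev v - u = -(u - ev v) by abel, norm_neg] at this
      linarith
    constructor
    · rw [mem_closedBall, dist_zero_right]
      calc ‖u‖ ≤ ‖ev v‖ + sd := h1
        _ ≤ b + sd := by linarith [(hG v hv).2]
    · rw [mem_ball, dist_zero_right, not_lt]
      apply max_le
      · linarith [(hG v hv).1]
      · exact norm_nonneg u
  -- measure computation
  have hcard : (G.card : ℝ≥0∞) = volume (⋃ v ∈ G, cube v) := by
    rw [measure_biUnion_finset (fun v _ w _ hvw => cube_disjoint hvw)
      (fun v _ => cube_measurable v)]
    simp [volume_cube]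
  have hmono : volume (⋃ v ∈ G, cube v) ≤
      volume (closedBall (0 : EuclideanSpace ℝ (Fin d)) b' \ ball 0 a') :=
    measure_mono (Set.iUnion₂_subset hsub)
  have hballs : volume (closedBall (0 : EuclideanSpace ℝ (Fin d)) b' \ ball 0 a') ≤
      ENNReal.ofReal (Vc * (b' ^ d - a' ^ d)) := by
    have hdiff : volume (closedBall (0 : EuclideanSpace ℝ (Fin d)) b' \ ball 0 a') =
        volume (closedBall (0 : EuclideanSpace ℝ (Fin d)) b') - volume (ball (0 : EuclideanSpace ℝ (Fin d)) a') := by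
      apply measure_diff
      · exact ball_subset_closedBall.trans (closedBall_subset_closedBall ha'b')
      · exact measurableSet_ball.nullMeasurableSet
      · exact (measure_ball_lt_top).ne
    rw [hdiff, EuclideanSpace.volume_closedBall, EuclideanSpace.volume_ball]
    simp only [Fintype.card_fin]
    rw [← ENNReal.ofReal_pow (by positivity), ← ENNReal.ofReal_pow (by positivity),
      ← ENNReal.ofReal_mul (by positivity), ← ENNReal.ofReal_mul (by positivity)]
    rw [← ENNReal.ofReal_sub _ (by positivity)]
    apply ENNReal.ofReal_le_ofReal
    apply le_of_eq; ring
  have hkey : (G.card : ℝ≥0∞) ≤ ENNReal.ofReal (Vc * (b' ^ d - a' ^ d)) :=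
    hcard ▸ (hmono.trans hballs)
  have hrhs : (0:ℝ) ≤ Vc * (b' ^ d - a' ^ d) := by
    nlinarith [pow_le_pow_left₀ ha'0 ha'b' d, hVc0]
  have hreal : (G.card : ℝ) ≤ Vc * (b' ^ d - a' ^ d) :=
    (ENNReal.ofReal_le_ofReal_iff hrhs).1 (by rw [ENNReal.ofReal_natCast]; exact hkey)
  -- estimate the volume difference
  have hpow : b' ^ d - a' ^ d ≤ d * b' ^ (d - 1) * (b' - a') := by
    obtain ⟨n, rfl⟩ : ∃ n, d = n + 1 := ⟨d - 1, (Nat.succ_pred_eq_of_pos hd).symm⟩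
    simpa using pow_sub_pow_le ha'0 ha'b' n
  have hwidth : b' - a' ≤ 1 + 2 * sd := by
    have : a - sd ≤ a' := le_max_left _ _
    linarith
  have hbase : b' ≤ a + 1 + sd := by linarith
  have hbase0 : (0:ℝ) ≤ a + 1 + sd := le_trans hb'0 hbase
  have hpowb : b' ^ (d - 1) ≤ (a + 1 + sd) ^ (d - 1) := pow_le_pow_left₀ hb'0 hbase _
  calc (G.card : ℝ) ≤ Vc * (b' ^ d - a' ^ d) := hreal
    _ ≤ Vc * (d * b' ^ (d - 1) * (b' - a')) := by
        apply mul_le_mul_of_nonneg_left hpow hVc0.le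
    _ ≤ Vc * (d * (a + 1 + sd) ^ (d - 1) * (1 + 2 * sd)) := by
        apply mul_le_mul_of_nonneg_left _ hVc0.le
        have h1 : (0:ℝ) ≤ (d:ℝ) * b' ^ (d-1) := by positivity
        have h3 : (0:ℝ) ≤ (d:ℝ) := by positivity
        calc (d:ℝ) * b' ^ (d-1) * (b' - a') ≤ (d:ℝ) * b' ^ (d-1) * (1 + 2 * sd) :=
              mul_le_mul_of_nonneg_left hwidth h1
          _ ≤ (d:ℝ) * (a + 1 + sd) ^ (d-1) * (1 + 2 * sd) := by
              apply mul_le_mul_of_nonneg_right (mul_le_mul_of_nonneg_left hpowb h3)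
              linarith
    _ = Kc d * (a + 1 + sd) ^ (d - 1) := by rw [Kc]; ring










lemma normZ_eq_ev (z y : Fin d → ℤ) : normZ z y = ‖ev (z - y)‖ := rfl

lemma normZ_nonneg (z y : Fin d → ℤ) : 0 ≤ normZ z y := norm_nonneg _

lemma shell_card (hd : 0 < d) {s : ℝ} (hs1 : 1 ≤ s) (z : Fin d → ℤ)
    (Fj : Finset (Fin d → ℤ)) (j : ℕ)
    (hFj : ∀ y ∈ Fj, (j:ℝ) ≤ |normZ z y - s| ∧ |normZ z y - s| < j + 1) :
    (Fj.card : ℝ) ≤ 2 * Kc d * (s + j + 1 + Real.sqrt d) ^ (d - 1) := by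
  classical
  have hsd0 : 0 ≤ Real.sqrt (d:ℝ) := Real.sqrt_nonneg _
  have hj0 : (0:ℝ) ≤ j := Nat.cast_nonneg j
  set upper := Fj.filter (fun y => s ≤ normZ z y) with hup
  set lower := Fj.filter (fun y => ¬ s ≤ normZ z y) with hlo
  have hsplit : upper.card + lower.card = Fj.card :=
    Finset.card_filter_add_card_filter_not _
  have hinj : Function.Injective (fun y : Fin d → ℤ => z - y) := fun y y' h => by
    simpa using sub_right_injective h
  -- upper part
  have hupper : (upper.card : ℝ) ≤ Kc d * (s + j + 1 + Real.sqrt d) ^ (d - 1) := by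
    have h := count_annulus hd (a := s + j) (b := s + j + 1)
      (by linarith) (by linarith) (upper.image (fun y => z - y)) ?_
    · rwa [Finset.card_image_of_injective _ hinj, show s + j + 1 = s + j + 1 by rfl] at h
    · intro v hv
      obtain ⟨y, hy, rfl⟩ := Finset.mem_image.1 hv
      have hy' := Finset.mem_filter.1 hy
      have habs := hFj y hy'.1
      have hts : s ≤ normZ z y := hy'.2
      rw [abs_of_nonneg (by linarith)] at habs
      rw [← normZ_eq_ev]
      constructor <;> linarith [habs.1, habs.2]
  -- lower part
  have hlower : (lower.card : ℝ) ≤ Kc d * (s + j + 1 + Real.sqrt d) ^ (d - 1) := by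
    have h := count_annulus hd (a := max (s - j - 1) 0) (b := max (s - j) 0)
      (le_max_right _ _) ?_ (lower.image (fun y => z - y)) ?_
    · rw [Finset.card_image_of_injective _ hinj] at h
      refine h.trans ?_
      apply mul_le_mul_of_nonneg_left _ (Kc_pos hd).le
      apply pow_le_pow_left₀ (by positivity)
      have h1 : max (s - j - 1) 0 ≤ s + j := max_le (by linarith) (by linarith)
      linarith
    · apply max_le _ (by positivity)
      have := le_max_left (s - j - 1) 0
      linarith
    · intro v hv
      obtain ⟨y, hy, rfl⟩ := Finset.mem_image.1 hv
      have hy' := Finset.mem_filter.1 hy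
      have habs := hFj y hy'.1
      have hts : normZ z y < s := by
        by_contra h'
        exact hy'.2 (not_lt.1 h')
      rw [abs_of_nonpos (by linarith)] at habs
      rw [← normZ_eq_ev]
      have h0 := normZ_nonneg z y
      constructor
      · exact max_le (by linarith [habs.2]) h0
      · exact le_max_of_le_left (by linarith [habs.1])
  have : (Fj.card : ℝ) = (upper.card : ℝ) + (lower.card : ℝ) := by
    rw [← hsplit]; push_cast; ring
  rw [this]; linarith








noncomputable def Cm (d : ℕ) (κ : ℝ) : ℝ :=
  2 * Kc d * ((2 + Real.sqrt d) * 2) ^ (d - 1) * ((1 + 1 / (κ + d - 1)) + (1 + 1 / κ))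

lemma Cm_pos (hd : 0 < d) {κ : ℝ} (hκ : 0 < κ) : 0 < Cm d κ := by
  have h1 : (0:ℝ) < κ + d - 1 := by
    have : (1:ℝ) ≤ d := by exact_mod_cast hd
    linarith
  have h2 := Kc_pos hd
  have hsd0 : 0 ≤ Real.sqrt (d:ℝ) := Real.sqrt_nonneg _
  unfold Cm
  have : (0:ℝ) < (2 + Real.sqrt d) * 2 := by linarith
  positivity

set_option maxHeartbeats 2000000 in
lemma main_sum (hd : 0 < d) {κ ℓ s : ℝ} (hκ : 0 < κ) (hℓ : 1 ≤ ℓ) (hs : ℓ ≤ s)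
    (z : Fin d → ℤ) (F : Finset (Fin d → ℤ)) :
    ∑ y ∈ F, (ℓ + |normZ z y - s|) ^ (-(κ + d)) ≤
      Cm d κ * (s / ℓ) ^ (d - 1) * ℓ ^ (-κ) := by
  classical
  have hℓ0 : (0:ℝ) < ℓ := lt_of_lt_of_le one_pos hℓ
  have hs1 : (1:ℝ) ≤ s := le_trans hℓ hs
  have hs0 : (0:ℝ) < s := lt_of_lt_of_le one_pos hs1
  have hsd0 : 0 ≤ Real.sqrt (d:ℝ) := Real.sqrt_nonneg _
  have hd1 : (1:ℝ) ≤ (d:ℝ) := by exact_mod_cast hd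
  have hexp0 : -(κ + (d:ℝ)) ≤ 0 := by linarith
  set jm : (Fin d → ℤ) → ℕ := fun y => ⌊|normZ z y - s|⌋₊ with hjm
  set N := F.sup jm + 1 with hN
  -- step 1 : pointwise bound by the floor
  have step1 : ∑ y ∈ F, (ℓ + |normZ z y - s|) ^ (-(κ + d)) ≤
      ∑ y ∈ F, (ℓ + (jm y : ℝ)) ^ (-(κ + d)) := by
    apply Finset.sum_le_sum
    intro y _
    apply Real.rpow_le_rpow_of_nonpos (by positivity) _ hexp0
    have := Nat.floor_le (abs_nonneg (normZ z y - s))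
    simpa [hjm] using by linarith
  -- step 2 : fiberwise decomposition
  have step2 : ∑ y ∈ F, (ℓ + (jm y : ℝ)) ^ (-(κ + d)) =
      ∑ j ∈ Finset.range N, ((F.filter (fun y => jm y = j)).card : ℝ) * (ℓ + j) ^ (-(κ + d)) := by
    rw [← Finset.sum_fiberwise_of_maps_to (g := jm) (t := Finset.range N)
      (fun y hy => Finset.mem_range.2 (Nat.lt_succ_of_le (Finset.le_sup hy)))]
    apply Finset.sum_congr rfl
    intro j _
    rw [Finset.sum_congr rfl (fun y hy => ?_), Finset.sum_const, nsmul_eq_mul]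
    rw [(Finset.mem_filter.1 hy).2]
  -- step 3 : shell cardinality bound
  have step3 : ∀ j : ℕ, ((F.filter (fun y => jm y = j)).card : ℝ) ≤
      2 * Kc d * ((2 + Real.sqrt d) * 2) ^ (d - 1) * (s ^ (d - 1) + (j:ℝ) ^ (d - 1)) := by
    intro j
    have hcard := shell_card hd hs1 z (F.filter (fun y => jm y = j)) j ?_
    · refine hcard.trans ?_
      have hK := (Kc_pos hd).le
      have hb1 : s + j + 1 + Real.sqrt d ≤ (2 + Real.sqrt d) * (s + j) := by
        have : (1:ℝ) + Real.sqrt d ≤ s + Real.sqrt d * s := by nlinarith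
        nlinarith [Nat.cast_nonneg (α := ℝ) j]
      have hb2 : (s + (j:ℝ)) ^ (d-1) ≤ 2 ^ (d-1) * (s ^ (d-1) + (j:ℝ) ^ (d-1)) := by
        have hmax : s + (j:ℝ) ≤ 2 * max s j := by
          rcases le_total s (j:ℝ) with h | h
          · have := le_max_right s (j:ℝ); nlinarith [le_max_right s (j:ℝ)]
          · nlinarith [le_max_left s (j:ℝ)]
        calc (s + (j:ℝ)) ^ (d-1) ≤ (2 * max s (j:ℝ)) ^ (d-1) := by
              apply pow_le_pow_left₀ (by positivity) hmax
          _ = 2 ^ (d-1) * max s (j:ℝ) ^ (d-1) := mul_pow _ _ _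
          _ ≤ 2 ^ (d-1) * (s ^ (d-1) + (j:ℝ) ^ (d-1)) := by
              apply mul_le_mul_of_nonneg_left _ (by positivity)
              rcases max_cases s (j:ℝ) with ⟨h1, _⟩ | ⟨h1, _⟩ <;> rw [h1] <;>
                [nlinarith [pow_nonneg (Nat.cast_nonneg (α := ℝ) j) (d-1)];
                 nlinarith [pow_nonneg hs0.le (d-1)]]
      calc 2 * Kc d * (s + j + 1 + Real.sqrt d) ^ (d-1)
          ≤ 2 * Kc d * ((2 + Real.sqrt d) * (s + j)) ^ (d-1) := by
            apply mul_le_mul_of_nonneg_left _ (by linarith)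
            apply pow_le_pow_left₀ (by positivity) hb1
        _ = 2 * Kc d * (2 + Real.sqrt d) ^ (d-1) * (s + (j:ℝ)) ^ (d-1) := by
            rw [mul_pow]; ring
        _ ≤ 2 * Kc d * (2 + Real.sqrt d) ^ (d-1) * (2 ^ (d-1) * (s ^ (d-1) + (j:ℝ) ^ (d-1))) := by
            apply mul_le_mul_of_nonneg_left hb2
            positivity
        _ = 2 * Kc d * ((2 + Real.sqrt d) * 2) ^ (d - 1) * (s ^ (d-1) + (j:ℝ) ^ (d-1)) := by
            rw [mul_pow]; ring
    · intro y hy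
      have h := (Finset.mem_filter.1 hy).2
      constructor
      · rw [← h]; exact_mod_cast Nat.floor_le (abs_nonneg _)
      · rw [← h]; push_cast; exact Nat.lt_floor_add_one _
  -- step 4 : sum the shells
  set Q : ℝ := 2 * Kc d * ((2 + Real.sqrt d) * 2) ^ (d - 1) with hQ
  have hQ0 : 0 < Q := by
    have := Kc_pos hd
    have h2 : (0:ℝ) < (2 + Real.sqrt d) * 2 := by linarith
    positivity
  have hβ1 : (0:ℝ) < κ + (d:ℝ) - 1 := by linarith
  have hcast : ((d - 1 : ℕ) : ℝ) = (d:ℝ) - 1 := Nat.cast_pred hd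
  have hpow_inv : ℓ ^ (-((d:ℝ) - 1)) = (ℓ ^ (d - 1 : ℕ))⁻¹ := by
    rw [← hcast, Real.rpow_neg hℓ0.le, Real.rpow_natCast]
  have stepA : ∑ j ∈ Finset.range N, (ℓ + (j:ℝ)) ^ (-(κ + d)) ≤
      (1 + 1 / (κ + (d:ℝ) - 1)) * ℓ ^ (-(κ + (d:ℝ) - 1)) := by
    have heq : ∀ j : ℕ, (ℓ + (j:ℝ)) ^ (-(κ + (d:ℝ))) = (ℓ + (j:ℝ)) ^ (-(κ + (d:ℝ) - 1) - 1) := by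
      intro j; congr 1; ring
    calc ∑ j ∈ Finset.range N, (ℓ + (j:ℝ)) ^ (-(κ + d))
        = ∑ j ∈ Finset.range N, (ℓ + (j:ℝ)) ^ (-(κ + (d:ℝ) - 1) - 1) :=
          Finset.sum_congr rfl (fun j _ => heq j)
      _ ≤ (1 + 1 / (κ + (d:ℝ) - 1)) * ℓ ^ (-(κ + (d:ℝ) - 1)) := sum_shell hβ1 hℓ N
  have stepA' : s ^ (d - 1) * ℓ ^ (-(κ + (d:ℝ) - 1)) = (s / ℓ) ^ (d - 1) * ℓ ^ (-κ) := by
    have h1 : ℓ ^ (-(κ + (d:ℝ) - 1)) = ℓ ^ (-κ) * ℓ ^ (-((d:ℝ) - 1)) := by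
      rw [← Real.rpow_add hℓ0]; congr 1; ring
    rw [h1, hpow_inv, div_pow]
    field_simp
  have stepB : ∑ j ∈ Finset.range N, (j:ℝ) ^ (d - 1) * (ℓ + (j:ℝ)) ^ (-(κ + d)) ≤
      (1 + 1 / κ) * ℓ ^ (-κ) := by
    have hterm : ∀ j : ℕ, (j:ℝ) ^ (d - 1) * (ℓ + (j:ℝ)) ^ (-(κ + d)) ≤
        (ℓ + (j:ℝ)) ^ (-κ - 1) := by
      intro j
      have hlj : (0:ℝ) < ℓ + j := by positivity
      have h1 : (j:ℝ) ^ (d - 1) ≤ (ℓ + (j:ℝ)) ^ (d - 1) :=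
        pow_le_pow_left₀ (Nat.cast_nonneg j) (by linarith) _
      have h2 : (ℓ + (j:ℝ)) ^ (d - 1 : ℕ) * (ℓ + (j:ℝ)) ^ (-(κ + (d:ℝ))) =
          (ℓ + (j:ℝ)) ^ (-κ - 1) := by
        rw [← Real.rpow_natCast (ℓ + (j:ℝ)) (d - 1), ← Real.rpow_add hlj, hcast]
        congr 1; ring
      calc (j:ℝ) ^ (d - 1) * (ℓ + (j:ℝ)) ^ (-(κ + d))
          ≤ (ℓ + (j:ℝ)) ^ (d - 1) * (ℓ + (j:ℝ)) ^ (-(κ + d)) := by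
            apply mul_le_mul_of_nonneg_right h1 (Real.rpow_nonneg hlj.le _)
        _ = (ℓ + (j:ℝ)) ^ (-κ - 1) := h2
    calc ∑ j ∈ Finset.range N, (j:ℝ) ^ (d - 1) * (ℓ + (j:ℝ)) ^ (-(κ + d))
        ≤ ∑ j ∈ Finset.range N, (ℓ + (j:ℝ)) ^ (-κ - 1) :=
          Finset.sum_le_sum (fun j _ => hterm j)
      _ ≤ (1 + 1 / κ) * ℓ ^ (-κ) := sum_shell hκ hℓ N
  have hone : (1:ℝ) ≤ (s / ℓ) ^ (d - 1) :=
    one_le_pow₀ ((one_le_div hℓ0).2 hs)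
  have hℓκ : (0:ℝ) < ℓ ^ (-κ) := Real.rpow_pos_of_pos hℓ0 _
  set SA := ∑ j ∈ Finset.range N, (ℓ + (j:ℝ)) ^ (-(κ + (d:ℝ))) with hSA
  set SB := ∑ j ∈ Finset.range N, (j:ℝ) ^ (d - 1) * (ℓ + (j:ℝ)) ^ (-(κ + (d:ℝ))) with hSB
  have hsplit : ∑ j ∈ Finset.range N, Q * (s ^ (d-1) + (j:ℝ) ^ (d-1)) * (ℓ + (j:ℝ)) ^ (-(κ + (d:ℝ)))
      = Q * (s ^ (d-1) * SA + SB) := by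
    rw [hSA, hSB, Finset.mul_sum, ← Finset.sum_add_distrib, Finset.mul_sum]
    apply Finset.sum_congr rfl
    intro j _; ring
  have hA2 : s ^ (d-1) * SA ≤ (1 + 1 / (κ + (d:ℝ) - 1)) * ((s / ℓ) ^ (d-1) * ℓ ^ (-κ)) := by
    calc s ^ (d-1) * SA ≤ s ^ (d-1) * ((1 + 1 / (κ + (d:ℝ) - 1)) * ℓ ^ (-(κ + (d:ℝ) - 1))) :=
          mul_le_mul_of_nonneg_left stepA (pow_nonneg hs0.le _)
      _ = (1 + 1 / (κ + (d:ℝ) - 1)) * (s ^ (d-1) * ℓ ^ (-(κ + (d:ℝ) - 1))) := by ring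
      _ = (1 + 1 / (κ + (d:ℝ) - 1)) * ((s / ℓ) ^ (d-1) * ℓ ^ (-κ)) := by rw [stepA']
  have hB2 : SB ≤ (1 + 1 / κ) * ((s / ℓ) ^ (d-1) * ℓ ^ (-κ)) := by
    calc SB ≤ (1 + 1 / κ) * ℓ ^ (-κ) := stepB
      _ ≤ (1 + 1 / κ) * ((s / ℓ) ^ (d-1) * ℓ ^ (-κ)) := by
          apply mul_le_mul_of_nonneg_left _ (by positivity)
          nlinarith
  calc ∑ y ∈ F, (ℓ + |normZ z y - s|) ^ (-(κ + d))
      ≤ ∑ y ∈ F, (ℓ + (jm y : ℝ)) ^ (-(κ + d)) := step1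
    _ = ∑ j ∈ Finset.range N, ((F.filter (fun y => jm y = j)).card : ℝ) * (ℓ + j) ^ (-(κ + d)) :=
        step2
    _ ≤ ∑ j ∈ Finset.range N, Q * (s ^ (d-1) + (j:ℝ) ^ (d-1)) * (ℓ + (j:ℝ)) ^ (-(κ + (d:ℝ))) := by
        apply Finset.sum_le_sum
        intro j _
        apply mul_le_mul_of_nonneg_right (step3 j) (Real.rpow_nonneg (by positivity) _)
    _ = Q * (s ^ (d-1) * SA + SB) := hsplit
    _ ≤ Q * ((1 + 1 / (κ + (d:ℝ) - 1)) * ((s / ℓ) ^ (d-1) * ℓ ^ (-κ)) +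
          (1 + 1 / κ) * ((s / ℓ) ^ (d-1) * ℓ ^ (-κ))) := by
        apply mul_le_mul_of_nonneg_left _ hQ0.le
        linarith
    _ = Cm d κ * (s / ℓ) ^ (d - 1) * ℓ ^ (-κ) := by
        rw [Cm, hQ]; ring


end Stmt7Aux

open Stmt7Aux

/-- Union bound tail estimate for the dependence radius: polynomial tails
`P[R^y > ℓ] ≤ C₀ ℓ^{-(κ+d)}` imply `P[𝓡_r^z > 2ℓ] ≤ C₁ (1 + r/ℓ)^{d-1} ℓ^{-κ}`. -/
theorem stmt7 {d : ℕ} (hd : 0 < d) {Ω : Type*} [MeasurableSpace Ω]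
    (P : Measure Ω) [IsProbabilityMeasure P]
    (R : (Fin d → ℤ) → Ω → ℝ) (hR0 : ∀ y ω, 0 ≤ R y ω)
    (C₀ κ : ℝ) (hC₀ : 0 < C₀) (hκ : 0 < κ)
    (htail : ∀ y : Fin d → ℤ, ∀ ℓ > (0 : ℝ),
      P {ω | ℓ < R y ω} ≤ ENNReal.ofReal (C₀ * ℓ ^ (-(κ + d)))) :
    ∃ C₁ > (0 : ℝ), ∀ (z : Fin d → ℤ) (r : ℝ), 0 < r → ∀ ℓ > (0 : ℝ),
      P {ω | 2 * ℓ < depRadius R z r ω} ≤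
        ENNReal.ofReal (C₁ * (1 + r / ℓ) ^ ((d : ℝ) - 1) * ℓ ^ (-κ)) := by
  classical
  have hd1 : (1:ℝ) ≤ (d:ℝ) := by exact_mod_cast hd
  set C₁ : ℝ := max 1 (C₀ * Cm d κ) with hC₁
  have hC₁1 : (1:ℝ) ≤ C₁ := le_max_left _ _
  refine ⟨C₁, lt_of_lt_of_le one_pos hC₁1, ?_⟩
  intro z r hr ℓ hℓ
  have hrl : 0 ≤ r / ℓ := by positivity
  have hone_base : (1:ℝ) ≤ 1 + r / ℓ := by linarith
  have hexp_nonneg : (0:ℝ) ≤ (d:ℝ) - 1 := by linarith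
  by_cases hcase : 1 ≤ ℓ
  · -- main case
    set s : ℝ := r + ℓ with hsdef
    have hs : ℓ ≤ s := by simp [hsdef]; linarith
    set m : (Fin d → ℤ) → ℝ := fun y => max (normZ z y - r) (r + 2 * ℓ - normZ z y) with hm
    have hmge : ∀ y, ℓ + |normZ z y - s| ≤ m y := by
      intro y
      rcases le_total (normZ z y) s with h | h
      · rw [abs_of_nonpos (by linarith)]
        apply le_max_of_le_right
        simp only [hsdef]; linarith
      · rw [abs_of_nonneg (by linarith)]
        apply le_max_of_le_left
        simp only [hsdef]; linarith
    have hm0 : ∀ y, 0 < m y := fun y =>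
      lt_of_lt_of_le (by positivity) (hmge y)
    have hincl : {ω | 2 * ℓ < depRadius R z r ω} ⊆ ⋃ y, {ω | m y < R y ω} := by
      intro ω hω
      simp only [Set.mem_setOf_eq] at hω
      simp only [Set.mem_iUnion, Set.mem_setOf_eq]
      by_contra hcon
      push_neg at hcon
      have hmem : (2 * ℓ) ∈ {ℓ' : ℝ | 0 < ℓ' ∧
          ∀ y, R y ω ≤ max (normZ z y - r) (r + ℓ' - normZ z y)} :=
        ⟨by linarith, fun y => (hcon y)⟩
      have hle : depRadius R z r ω ≤ 2 * ℓ :=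
        csInf_le ⟨0, fun x hx => hx.1.le⟩ hmem
      linarith
    have hexp0 : -(κ + (d:ℝ)) ≤ 0 := by linarith
    calc P {ω | 2 * ℓ < depRadius R z r ω}
        ≤ P (⋃ y, {ω | m y < R y ω}) := measure_mono hincl
      _ ≤ ∑' y, P {ω | m y < R y ω} := measure_iUnion_le _
      _ ≤ ∑' y, ENNReal.ofReal (C₀ * (m y) ^ (-(κ + d))) :=
          ENNReal.tsum_le_tsum (fun y => htail y (m y) (hm0 y))
      _ ≤ ENNReal.ofReal (C₀ * (Cm d κ * (s / ℓ) ^ (d - 1) * ℓ ^ (-κ))) := by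
          rw [ENNReal.tsum_eq_iSup_sum]
          apply iSup_le
          intro F
          rw [← ENNReal.ofReal_sum_of_nonneg (fun y _ =>
            mul_nonneg hC₀.le (Real.rpow_nonneg (hm0 y).le _))]
          apply ENNReal.ofReal_le_ofReal
          calc ∑ y ∈ F, C₀ * (m y) ^ (-(κ + d))
              = C₀ * ∑ y ∈ F, (m y) ^ (-(κ + (d:ℝ))) := by rw [Finset.mul_sum]
            _ ≤ C₀ * ∑ y ∈ F, (ℓ + |normZ z y - s|) ^ (-(κ + (d:ℝ))) := by
                apply mul_le_mul_of_nonneg_left _ hC₀.le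
                apply Finset.sum_le_sum
                intro y _
                exact Real.rpow_le_rpow_of_nonpos (by positivity) (hmge y) hexp0
            _ ≤ C₀ * (Cm d κ * (s / ℓ) ^ (d - 1) * ℓ ^ (-κ)) :=
                mul_le_mul_of_nonneg_left (main_sum hd hκ hcase hs z F) hC₀.le
      _ ≤ ENNReal.ofReal (C₁ * (1 + r / ℓ) ^ ((d : ℝ) - 1) * ℓ ^ (-κ)) := by
          apply ENNReal.ofReal_le_ofReal
          have hbase : 1 + r / ℓ = s / ℓ := by
            rw [hsdef]; field_simp; ring
          have hpoweq : (1 + r / ℓ) ^ ((d : ℝ) - 1) = (s / ℓ) ^ (d - 1 : ℕ) := by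
            rw [hbase, ← Real.rpow_natCast (s / ℓ) (d - 1), Nat.cast_pred hd]
          rw [hpoweq]
          have h1 : C₀ * Cm d κ ≤ C₁ := le_max_right _ _
          have h2 : (0:ℝ) ≤ (s / ℓ) ^ (d - 1 : ℕ) * ℓ ^ (-κ) := by
            have : (0:ℝ) < ℓ := by linarith
            positivity
          calc C₀ * (Cm d κ * (s / ℓ) ^ (d - 1) * ℓ ^ (-κ))
              = (C₀ * Cm d κ) * ((s / ℓ) ^ (d - 1 : ℕ) * ℓ ^ (-κ)) := by ring
            _ ≤ C₁ * ((s / ℓ) ^ (d - 1 : ℕ) * ℓ ^ (-κ)) :=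
                mul_le_mul_of_nonneg_right h1 h2
            _ = C₁ * (s / ℓ) ^ (d - 1 : ℕ) * ℓ ^ (-κ) := by ring
  · -- small ℓ : trivial bound
    push_neg at hcase
    have h1 : (1:ℝ) ≤ (1 + r / ℓ) ^ ((d : ℝ) - 1) := Real.one_le_rpow hone_base hexp_nonneg
    have h2 : (1:ℝ) ≤ ℓ ^ (-κ) :=
      Real.one_le_rpow_of_pos_of_le_one_of_nonpos hℓ hcase.le (by linarith)
    calc P {ω | 2 * ℓ < depRadius R z r ω} ≤ 1 := prob_le_one
      _ ≤ ENNReal.ofReal (C₁ * (1 + r / ℓ) ^ ((d : ℝ) - 1) * ℓ ^ (-κ)) := by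
          rw [ENNReal.one_le_ofReal]
          have := mul_le_mul (mul_le_mul hC₁1 h1 zero_le_one (by linarith))
            h2 zero_le_one (by nlinarith)
          simpa using this
end
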